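/- Let R, S be rings and M an (R,S)-bimodule which is an equivalence bimodule. Then M is finitely generated and projective as a left R-module, and finitely generated and projective as a right S-module. -/

import Mathlib

open scoped TensorProduct
open MulOpposite

namespace Paper

noncomputable section

/-- The subgroup of relators defining the balanced tensor product `M ⊗[S] N`
of a right `S`-module `M` and a left `S`-module `N`. -/
def balRel (S : Type*) [Ring S] (M : Type*) [AddCommGroup M] [Module Sᵐᵒᵖ M]
    (N : Type*) [AddCommGroup N] [Module S N] : AddSubgroup (M ⊗[ℤ] N) :=
  AddSubgroup.closure
    {x | ∃ (m : M) (s : S) (n : N), x = (op s • m) ⊗ₜ[ℤ] n - m ⊗ₜ[ℤ] (s • n)}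

/-- The balanced tensor product `M ⊗[S] N` of a right `S`-module `M` and a
left `S`-module `N`: the quotient of the tensor product `M ⊗[ℤ] N` of abelian
groups by the relations `(m • s) ⊗ n = m ⊗ (s • n)`. -/
def BalTensor (S : Type*) [Ring S] (M : Type*) [AddCommGroup M] [Module Sᵐᵒᵖ M]
    (N : Type*) [AddCommGroup N] [Module S N] : Type _ :=
  (M ⊗[ℤ] N) ⧸ balRel S M N

instance (S : Type*) [Ring S] (M : Type*) [AddCommGroup M] [Module Sᵐᵒᵖ M]
    (N : Type*) [AddCommGroup N] [Module S N] : AddCommGroup (BalTensor S M N) :=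
  QuotientAddGroup.Quotient.addCommGroup _

/-- The elementary tensor `m ⊗ n` in the balanced tensor product `M ⊗[S] N`. -/
def BalTensor.tmul (S : Type*) [Ring S] (M : Type*) [AddCommGroup M] [Module Sᵐᵒᵖ M]
    (N : Type*) [AddCommGroup N] [Module S N] (m : M) (n : N) : BalTensor S M N :=
  QuotientAddGroup.mk (m ⊗ₜ[ℤ] n)


/-- The canonical projection onto the balanced tensor product. -/
def BalTensor.mk (S : Type*) [Ring S] (M : Type*) [AddCommGroup M] [Module Sᵐᵒᵖ M]
    (N : Type*) [AddCommGroup N] [Module S N] (x : M ⊗[ℤ] N) : BalTensor S M N :=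
  QuotientAddGroup.mk x

/-- The left action of `r : R` on `M ⊗[ℤ] N` through the first factor. -/
def lsmulAux (R : Type*) [Ring R] (M : Type*) [AddCommGroup M] [Module R M]
    (N : Type*) [AddCommGroup N] (r : R) : M ⊗[ℤ] N →+ M ⊗[ℤ] N :=
  (LinearMap.rTensor N ((DistribMulAction.toAddMonoidHom M r).toIntLinearMap)).toAddMonoidHom

/-- The right action of `t : Tᵐᵒᵖ` on `M ⊗[ℤ] N` through the second factor. -/
def rsmulAux (T : Type*) [Ring T] (M : Type*) [AddCommGroup M]
    (N : Type*) [AddCommGroup N] [Module Tᵐᵒᵖ N] (t : Tᵐᵒᵖ) : M ⊗[ℤ] N →+ M ⊗[ℤ] N :=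
  (LinearMap.lTensor M ((DistribMulAction.toAddMonoidHom N t).toIntLinearMap)).toAddMonoidHom

section LeftAction

variable (R S : Type*) [Ring R] [Ring S]
  (M : Type*) [AddCommGroup M] [Module R M] [Module Sᵐᵒᵖ M] [SMulCommClass R Sᵐᵒᵖ M]
  (N : Type*) [AddCommGroup N] [Module S N]

theorem lsmulAux_le (r : R) :
    balRel S M N ≤ (balRel S M N).comap (lsmulAux R M N r) := by
  rw [balRel, AddSubgroup.closure_le]
  rintro x ⟨m, s, n, rfl⟩
  simp only [SetLike.mem_coe, AddSubgroup.mem_comap, map_sub]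
  have h1 : lsmulAux R M N r ((op s • m) ⊗ₜ[ℤ] n) = (op s • (r • m)) ⊗ₜ[ℤ] n := by
    simp [lsmulAux, LinearMap.rTensor_tmul, smul_comm]
  have h2 : lsmulAux R M N r (m ⊗ₜ[ℤ] (s • n)) = (r • m) ⊗ₜ[ℤ] (s • n) := by
    simp [lsmulAux, LinearMap.rTensor_tmul]
  rw [h1, h2]
  exact AddSubgroup.subset_closure ⟨r • m, s, n, rfl⟩

instance : SMul R (BalTensor S M N) :=
  ⟨fun r => QuotientAddGroup.map _ _ (lsmulAux R M N r) (lsmulAux_le R S M N r)⟩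

theorem BalTensor.lsmul_mk (r : R) (x : M ⊗[ℤ] N) :
    r • (BalTensor.mk S M N x) = BalTensor.mk S M N (lsmulAux R M N r x) := rfl

instance : Module R (BalTensor S M N) where
  smul r x := r • x
  one_smul x := by
    induction x using QuotientAddGroup.induction_on with
    | H y =>
      show QuotientAddGroup.mk (lsmulAux R M N 1 y) = _
      congr 1
      induction y using TensorProduct.induction_on with
      | zero => simp
      | tmul m n => simp [lsmulAux]
      | add a b ha hb => simp only [map_add, ha, hb]
  mul_smul a b x := by
    induction x using QuotientAddGroup.induction_on with
    | H y =>
      show QuotientAddGroup.mk (lsmulAux R M N (a * b) y) =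
        QuotientAddGroup.mk (lsmulAux R M N a (lsmulAux R M N b y))
      congr 1
      induction y using TensorProduct.induction_on with
      | zero => simp
      | tmul m n => simp [lsmulAux, mul_smul]
      | add a' b' ha hb => simp only [map_add, ha, hb]
  smul_zero r := map_zero (QuotientAddGroup.map _ _ (lsmulAux R M N r) (lsmulAux_le R S M N r))
  smul_add r x y := map_add (QuotientAddGroup.map _ _ (lsmulAux R M N r) (lsmulAux_le R S M N r)) x y
  add_smul a b x := by
    induction x using QuotientAddGroup.induction_on with
    | H y =>
      show QuotientAddGroup.mk (lsmulAux R M N (a + b) y) =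
        QuotientAddGroup.mk (lsmulAux R M N a y) + QuotientAddGroup.mk (lsmulAux R M N b y)
      show (QuotientAddGroup.mk (lsmulAux R M N (a + b) y) : (M ⊗[ℤ] N) ⧸ balRel S M N) =
        QuotientAddGroup.mk (lsmulAux R M N a y + lsmulAux R M N b y)
      congr 1
      induction y using TensorProduct.induction_on with
      | zero => simp
      | tmul m n => simp [lsmulAux, add_smul, TensorProduct.add_tmul]
      | add a' b' ha hb =>
        simp only [map_add, ha, hb]
        abel
  zero_smul x := by
    induction x using QuotientAddGroup.induction_on with
    | H y =>
      show QuotientAddGroup.mk (lsmulAux R M N (0 : R) y) = 0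
      have : lsmulAux R M N (0 : R) y = 0 := by
        induction y using TensorProduct.induction_on with
        | zero => simp
        | tmul m n => simp [lsmulAux]
        | add a' b' ha hb => simp only [map_add, ha, hb]; abel
      rw [this]
      rfl

theorem BalTensor.smul_tmul (r : R) (m : M) (n : N) :
    r • (BalTensor.tmul S M N m n) = BalTensor.tmul S M N (r • m) n := by
  show QuotientAddGroup.mk (lsmulAux R M N r (m ⊗ₜ[ℤ] n)) = _
  rw [BalTensor.tmul]
  congr 1

end LeftAction

section RightAction

variable (S T : Type*) [Ring S] [Ring T]
  (M : Type*) [AddCommGroup M] [Module Sᵐᵒᵖ M]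
  (N : Type*) [AddCommGroup N] [Module S N] [Module Tᵐᵒᵖ N] [SMulCommClass S Tᵐᵒᵖ N]

theorem rsmulAux_le (t : Tᵐᵒᵖ) :
    balRel S M N ≤ (balRel S M N).comap (rsmulAux T M N t) := by
  rw [balRel, AddSubgroup.closure_le]
  rintro x ⟨m, s, n, rfl⟩
  simp only [SetLike.mem_coe, AddSubgroup.mem_comap, map_sub]
  have h1 : rsmulAux T M N t ((op s • m) ⊗ₜ[ℤ] n) = (op s • m) ⊗ₜ[ℤ] (t • n) := by
    simp [rsmulAux, LinearMap.lTensor_tmul]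
  have h2 : rsmulAux T M N t (m ⊗ₜ[ℤ] (s • n)) = m ⊗ₜ[ℤ] (s • (t • n)) := by
    simp [rsmulAux, LinearMap.lTensor_tmul, smul_comm]
  rw [h1, h2]
  exact AddSubgroup.subset_closure ⟨m, s, t • n, rfl⟩

instance : SMul Tᵐᵒᵖ (BalTensor S M N) :=
  ⟨fun t => QuotientAddGroup.map _ _ (rsmulAux T M N t) (rsmulAux_le S T M N t)⟩

theorem BalTensor.rsmul_mk (t : Tᵐᵒᵖ) (x : M ⊗[ℤ] N) :
    t • (BalTensor.mk S M N x) = BalTensor.mk S M N (rsmulAux T M N t x) := rfl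

instance : Module Tᵐᵒᵖ (BalTensor S M N) where
  smul t x := t • x
  one_smul x := by
    induction x using QuotientAddGroup.induction_on with
    | H y =>
      show QuotientAddGroup.mk (rsmulAux T M N 1 y) = _
      congr 1
      induction y using TensorProduct.induction_on with
      | zero => simp
      | tmul m n => simp [rsmulAux]
      | add a b ha hb => simp only [map_add, ha, hb]
  mul_smul a b x := by
    induction x using QuotientAddGroup.induction_on with
    | H y =>
      show QuotientAddGroup.mk (rsmulAux T M N (a * b) y) =
        QuotientAddGroup.mk (rsmulAux T M N a (rsmulAux T M N b y))
      congr 1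
      induction y using TensorProduct.induction_on with
      | zero => simp
      | tmul m n => simp [rsmulAux, mul_smul]
      | add a' b' ha hb => simp only [map_add, ha, hb]
  smul_zero t := map_zero (QuotientAddGroup.map _ _ (rsmulAux T M N t) (rsmulAux_le S T M N t))
  smul_add t x y := map_add (QuotientAddGroup.map _ _ (rsmulAux T M N t) (rsmulAux_le S T M N t)) x y
  add_smul a b x := by
    induction x using QuotientAddGroup.induction_on with
    | H y =>
      show QuotientAddGroup.mk (rsmulAux T M N (a + b) y) =
        QuotientAddGroup.mk (rsmulAux T M N a y) + QuotientAddGroup.mk (rsmulAux T M N b y)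
      show (QuotientAddGroup.mk (rsmulAux T M N (a + b) y) : (M ⊗[ℤ] N) ⧸ balRel S M N) =
        QuotientAddGroup.mk (rsmulAux T M N a y + rsmulAux T M N b y)
      congr 1
      induction y using TensorProduct.induction_on with
      | zero => simp
      | tmul m n => simp [rsmulAux, add_smul, TensorProduct.tmul_add]
      | add a' b' ha hb =>
        simp only [map_add, ha, hb]
        abel
  zero_smul x := by
    induction x using QuotientAddGroup.induction_on with
    | H y =>
      show QuotientAddGroup.mk (rsmulAux T M N (0 : Tᵐᵒᵖ) y) = 0
      have : rsmulAux T M N (0 : Tᵐᵒᵖ) y = 0 := by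
        induction y using TensorProduct.induction_on with
        | zero => simp
        | tmul m n => simp [rsmulAux]
        | add a' b' ha hb => simp only [map_add, ha, hb]; abel
      rw [this]
      rfl

theorem BalTensor.tmul_smul (t : Tᵐᵒᵖ) (m : M) (n : N) :
    t • (BalTensor.tmul S M N m n) = BalTensor.tmul S M N m (t • n) := by
  show QuotientAddGroup.mk (rsmulAux T M N t (m ⊗ₜ[ℤ] n)) = _
  rw [BalTensor.tmul]
  congr 1

end RightAction

section Bimodule

variable (R S T : Type*) [Ring R] [Ring S] [Ring T]
  (M : Type*) [AddCommGroup M] [Module R M] [Module Sᵐᵒᵖ M] [SMulCommClass R Sᵐᵒᵖ M]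
  (N : Type*) [AddCommGroup N] [Module S N] [Module Tᵐᵒᵖ N] [SMulCommClass S Tᵐᵒᵖ N]

instance : SMulCommClass R Tᵐᵒᵖ (BalTensor S M N) where
  smul_comm r t x := by
    induction x using QuotientAddGroup.induction_on with
    | H y =>
      show QuotientAddGroup.mk (lsmulAux R M N r (rsmulAux T M N t y)) =
        QuotientAddGroup.mk (rsmulAux T M N t (lsmulAux R M N r y))
      congr 1
      induction y using TensorProduct.induction_on with
      | zero => simp
      | tmul m n => simp [rsmulAux, lsmulAux]
      | add a b ha hb => simp only [map_add, ha, hb]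

end Bimodule

end

end Paper


namespace Paper

set_option linter.unusedSectionVars false

noncomputable section Aux

open MulOpposite

section Basic

variable {S : Type*} [Ring S] {M : Type*} [AddCommGroup M] [Module Sᵐᵒᵖ M]
  {N : Type*} [AddCommGroup N] [Module S N]

theorem BalTensor.tmul_add' (m : M) (n₁ n₂ : N) :
    BalTensor.tmul S M N m (n₁ + n₂) = BalTensor.tmul S M N m n₁ + BalTensor.tmul S M N m n₂ := by
  show BalTensor.mk S M N _ = BalTensor.mk S M N _ + BalTensor.mk S M N _
  rw [TensorProduct.tmul_add]
  rfl

theorem BalTensor.add_tmul' (m₁ m₂ : M) (n : N) :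
    BalTensor.tmul S M N (m₁ + m₂) n = BalTensor.tmul S M N m₁ n + BalTensor.tmul S M N m₂ n := by
  show BalTensor.mk S M N _ = BalTensor.mk S M N _ + BalTensor.mk S M N _
  rw [TensorProduct.add_tmul]
  rfl

theorem BalTensor.sum_tmul' {ι : Type*} (t : Finset ι) (f : ι → M) (n : N) :
    BalTensor.tmul S M N (∑ i ∈ t, f i) n = ∑ i ∈ t, BalTensor.tmul S M N (f i) n := by
  classical
  induction t using Finset.induction with
  | empty =>
    simp only [Finset.sum_empty]
    show BalTensor.mk S M N _ = 0
    rw [TensorProduct.zero_tmul]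
    rfl
  | insert _ _ h ih =>
    rw [Finset.sum_insert h, Finset.sum_insert h, BalTensor.add_tmul', ih]

theorem BalTensor.tmul_sum' {ι : Type*} (m : M) (t : Finset ι) (f : ι → N) :
    BalTensor.tmul S M N m (∑ i ∈ t, f i) = ∑ i ∈ t, BalTensor.tmul S M N m (f i) := by
  classical
  induction t using Finset.induction with
  | empty =>
    simp only [Finset.sum_empty]
    show BalTensor.mk S M N _ = 0
    rw [TensorProduct.tmul_zero]
    rfl
  | insert _ _ h ih =>
    rw [Finset.sum_insert h, Finset.sum_insert h, BalTensor.tmul_add', ih]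

theorem BalTensor.tmul_balance (m : M) (s : S) (n : N) :
    BalTensor.tmul S M N (op s • m) n = BalTensor.tmul S M N m (s • n) := by
  show QuotientAddGroup.mk _ = QuotientAddGroup.mk _
  rw [QuotientAddGroup.eq, neg_add_eq_sub, ← neg_sub]
  exact AddSubgroup.neg_mem _ (AddSubgroup.subset_closure ⟨m, s, n, rfl⟩)

/-- Lift an `S`-balanced biadditive map to the balanced tensor product. -/
def BalTensor.liftAH {P : Type*} [AddCommGroup P] (f : M →+ N →+ P)
    (hf : ∀ (m : M) (s : S) (n : N), f (op s • m) n = f m (s • n)) :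
    BalTensor S M N →+ P :=
  QuotientAddGroup.lift (balRel S M N)
    (TensorProduct.liftAddHom f (fun c m n => by
      rw [map_zsmul f c m, AddMonoidHom.smul_apply, ← map_zsmul (f m) c n]))
    (by
      rw [balRel, AddSubgroup.closure_le]
      rintro x ⟨m, s, n, rfl⟩
      simp only [SetLike.mem_coe, AddMonoidHom.mem_ker, map_sub,
        TensorProduct.liftAddHom_tmul, hf, sub_self])

theorem BalTensor.liftAH_tmul {P : Type*} [AddCommGroup P] (f : M →+ N →+ P)
    (hf : ∀ (m : M) (s : S) (n : N), f (op s • m) n = f m (s • n)) (m : M) (n : N) :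
    BalTensor.liftAH f hf (BalTensor.tmul S M N m n) = f m n := rfl

end Basic

section Maps

variable {R S : Type*} [Ring R] [Ring S]
  {M : Type*} [AddCommGroup M] [Module R M] [Module Sᵐᵒᵖ M] [SMulCommClass R Sᵐᵒᵖ M]
  {N : Type*} [AddCommGroup N] [Module S N] [Module Rᵐᵒᵖ N] [SMulCommClass S Rᵐᵒᵖ N]

/-- For a fixed `m : M`, the map `N ⊗[R] M → M`, `y ⊗ z ↦ eR (m ⊗ y) • z`. -/
def Gmap (eR : BalTensor S M N ≃+ R)
    (hR : ∀ (r : R) (x : BalTensor S M N), eR (op r • x) = eR x * r) (m : M) :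
    BalTensor R N M →+ M :=
  BalTensor.liftAH
    (AddMonoidHom.mk'
      (fun y => AddMonoidHom.mk' (fun z => eR (BalTensor.tmul S M N m y) • z)
        (fun z₁ z₂ => smul_add _ z₁ z₂))
      (fun y₁ y₂ => by
        ext z
        simp only [AddMonoidHom.mk'_apply, AddMonoidHom.add_apply]
        rw [BalTensor.tmul_add', map_add, add_smul]))
    (fun y r z => by
      simp only [AddMonoidHom.mk'_apply]
      rw [← BalTensor.tmul_smul, hR, mul_smul])

theorem Gmap_tmul (eR : BalTensor S M N ≃+ R)
    (hR : ∀ (r : R) (x : BalTensor S M N), eR (op r • x) = eR x * r) (m : M) (y : N) (z : M) :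
    Gmap eR hR m (BalTensor.tmul R N M y z) = eR (BalTensor.tmul S M N m y) • z := rfl

/-- For a fixed `z : M`, the map `M ⊗[S] N → M`, `x ⊗ y ↦ x • eS (y ⊗ z)` (right action). -/
def Fmap (eS : BalTensor R N M ≃+ S)
    (hS : ∀ (s : S) (x : BalTensor R N M), eS (s • x) = s * eS x) (z : M) :
    BalTensor S M N →+ M :=
  BalTensor.liftAH
    (AddMonoidHom.mk'
      (fun x => AddMonoidHom.mk' (fun y => op (eS (BalTensor.tmul R N M y z)) • x)
        (fun y₁ y₂ => by
          rw [BalTensor.add_tmul', map_add, op_add, add_smul]))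
      (fun x₁ x₂ => by
        ext y
        simp only [AddMonoidHom.mk'_apply, AddMonoidHom.add_apply]
        rw [smul_add]))
    (fun x s y => by
      simp only [AddMonoidHom.mk'_apply]
      rw [← BalTensor.smul_tmul, hS, smul_smul, ← op_mul])

theorem Fmap_tmul (eS : BalTensor R N M ≃+ S)
    (hS : ∀ (s : S) (x : BalTensor R N M), eS (s • x) = s * eS x) (z : M) (x : M) (y : N) :
    Fmap eS hS z (BalTensor.tmul S M N x y) = op (eS (BalTensor.tmul R N M y z)) • x := rfl

end Maps

/-- A module with a finite dual basis is finite and projective. -/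
theorem finite_projective_of_dual_basis {R M : Type*} [Ring R] [AddCommGroup M] [Module R M]
    {alpha : Type*} (t : Finset alpha) (a : alpha → M) (f : alpha → (M →ₗ[R] R))
    (h : ∀ m : M, ∑ p ∈ t, f p m • a p = m) :
    Module.Finite R M ∧ Module.Projective R M := by
  classical
  let g : M →ₗ[R] ({p // p ∈ t} → R) :=
    { toFun := fun m p => f p.1 m
      map_add' := fun m₁ m₂ => by ext p; simp
      map_smul' := fun r m => by ext p; simp }
  let pr : ({p // p ∈ t} → R) →ₗ[R] M :=
    { toFun := fun c => ∑ p ∈ t.attach, c p • a p.1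
      map_add' := fun c₁ c₂ => by
        simp only [Pi.add_apply, add_smul]
        rw [Finset.sum_add_distrib]
      map_smul' := fun r c => by
        simp only [Pi.smul_apply, smul_eq_mul, mul_smul, RingHom.id_apply]
        rw [Finset.smul_sum] }
  have hsplit : pr.comp g = LinearMap.id := by
    ext m
    show ∑ p ∈ t.attach, f p.1 m • a p.1 = m
    rw [Finset.sum_attach t (fun p => f p m • a p)]
    exact h m
  refine ⟨?_, Module.Projective.of_split g pr hsplit⟩
  exact Module.Finite.of_surjective pr
    (fun m => ⟨g m, LinearMap.congr_fun hsplit m⟩)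

end Aux

end Paper

open Paper MulOpposite in
/-- **part of 'Morita I'.** Let `R, S` be rings and `M` an `(R,S)`-bimodule
which is an equivalence bimodule (i.e. there is an `(S,R)`-bimodule `N` with `(R,R)`- and
`(S,S)`-bimodule isomorphisms `M ⊗[S] N ≅ R` and `N ⊗[R] M ≅ S`). Then `M` is finitely
generated and projective as a left `R`-module, and finitely generated and projective as a
right `S`-module (i.e. as a left module over the opposite ring `Sᵒᵖ`). -/
theorem equivalence_bimodule_finite_projective
    (R S : Type*) [Ring R] [Ring S]
    (M : Type*) [AddCommGroup M] [Module R M] [Module Sᵐᵒᵖ M] [SMulCommClass R Sᵐᵒᵖ M]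
    (N : Type*) [AddCommGroup N] [Module S N] [Module Rᵐᵒᵖ N] [SMulCommClass S Rᵐᵒᵖ N]
    (eR : BalTensor S M N ≃+ R)
    (eR_left : ∀ (r : R) (x : BalTensor S M N), eR (r • x) = r * eR x)
    (eR_right : ∀ (r : R) (x : BalTensor S M N), eR (op r • x) = eR x * r)
    (eS : BalTensor R N M ≃+ S)
    (eS_left : ∀ (s : S) (x : BalTensor R N M), eS (s • x) = s * eS x)
    (eS_right : ∀ (s : S) (x : BalTensor R N M), eS (op s • x) = eS x * s) :
    Module.Finite R M ∧ Module.Projective R M ∧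
    Module.Finite Sᵐᵒᵖ M ∧ Module.Projective Sᵐᵒᵖ M := by
  classical
  obtain ⟨x, hx⟩ := QuotientAddGroup.mk'_surjective (balRel S M N) (eR.symm 1)
  obtain ⟨A, hA⟩ := TensorProduct.exists_finset x
  obtain ⟨y, hy⟩ := QuotientAddGroup.mk'_surjective (balRel R N M) (eS.symm 1)
  obtain ⟨B, hB⟩ := TensorProduct.exists_finset y
  have hu : eR.symm 1 = ∑ p ∈ A, BalTensor.tmul S M N p.1 p.2 := by
    rw [← hx, hA, map_sum]; rfl
  have hv : eS.symm 1 = ∑ q ∈ B, BalTensor.tmul R N M q.1 q.2 := by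
    rw [← hy, hB, map_sum]; rfl
  have hRsymm : ∀ r : R, eR.symm r = r • eR.symm 1 := fun r =>
    eR.injective (by rw [AddEquiv.apply_symm_apply, eR_left, AddEquiv.apply_symm_apply, mul_one])
  have hRsymm' : ∀ r : R, eR.symm r = op r • eR.symm 1 := fun r =>
    eR.injective (by rw [AddEquiv.apply_symm_apply, eR_right, AddEquiv.apply_symm_apply, one_mul])
  have hSsymm : ∀ s : S, eS.symm s = s • eS.symm 1 := fun s =>
    eS.injective (by rw [AddEquiv.apply_symm_apply, eS_left, AddEquiv.apply_symm_apply, mul_one])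
  have hSsymm' : ∀ s : S, eS.symm s = op s • eS.symm 1 := fun s =>
    eS.injective (by rw [AddEquiv.apply_symm_apply, eS_right, AddEquiv.apply_symm_apply, one_mul])
  have hvL : ∀ s : S, ∑ q ∈ B, BalTensor.tmul R N M (s • q.1) q.2 = eS.symm s := by
    intro s
    rw [hSsymm, hv]
    refine Eq.trans ?_ Finset.smul_sum.symm
    exact Finset.sum_congr rfl fun q _ => (BalTensor.smul_tmul S R N M s q.1 q.2).symm
  have hvR : ∀ s : S, ∑ q ∈ B, BalTensor.tmul R N M q.1 (op s • q.2) = eS.symm s := by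
    intro s
    rw [hSsymm', hv]
    refine Eq.trans ?_ Finset.smul_sum.symm
    exact Finset.sum_congr rfl fun q _ => (BalTensor.tmul_smul R S N M (op s) q.1 q.2).symm
  have huL : ∀ r : R, ∑ p ∈ A, BalTensor.tmul S M N (r • p.1) p.2 = eR.symm r := by
    intro r
    rw [hRsymm, hu]
    refine Eq.trans ?_ Finset.smul_sum.symm
    exact Finset.sum_congr rfl fun p _ => (BalTensor.smul_tmul R S M N r p.1 p.2).symm
  have huR : ∀ r : R, ∑ p ∈ A, BalTensor.tmul S M N p.1 (op r • p.2) = eR.symm r := by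
    intro r
    rw [hRsymm', hu]
    refine Eq.trans ?_ Finset.smul_sum.symm
    exact Finset.sum_congr rfl fun p _ => (BalTensor.tmul_smul S R M N (op r) p.1 p.2).symm
  have key1 : ∀ m : M,
      ∑ q ∈ B, eR (BalTensor.tmul S M N
        (∑ p ∈ A, op (eS (BalTensor.tmul R N M p.2 m)) • p.1) q.1) • q.2 = m := by
    intro m
    have step1 : ∀ q : N × M,
        BalTensor.tmul S M N (∑ p ∈ A, op (eS (BalTensor.tmul R N M p.2 m)) • p.1) q.1
          = ∑ p ∈ A, BalTensor.tmul S M N p.1 (eS (BalTensor.tmul R N M p.2 m) • q.1) := by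
      intro q
      rw [BalTensor.sum_tmul']
      exact Finset.sum_congr rfl fun p _ =>
        BalTensor.tmul_balance p.1 (eS (BalTensor.tmul R N M p.2 m)) q.1
    calc ∑ q ∈ B, eR (BalTensor.tmul S M N
            (∑ p ∈ A, op (eS (BalTensor.tmul R N M p.2 m)) • p.1) q.1) • q.2
        = ∑ q ∈ B, ∑ p ∈ A,
            eR (BalTensor.tmul S M N p.1 (eS (BalTensor.tmul R N M p.2 m) • q.1)) • q.2 := by
          refine Finset.sum_congr rfl fun q _ => ?_
          rw [step1 q, map_sum, Finset.sum_smul]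
      _ = ∑ p ∈ A, ∑ q ∈ B,
            eR (BalTensor.tmul S M N p.1 (eS (BalTensor.tmul R N M p.2 m) • q.1)) • q.2 :=
          Finset.sum_comm
      _ = ∑ p ∈ A, Gmap eR eR_right p.1
            (∑ q ∈ B, BalTensor.tmul R N M (eS (BalTensor.tmul R N M p.2 m) • q.1) q.2) := by
          refine Finset.sum_congr rfl fun p _ => ?_
          rw [map_sum]
          exact Finset.sum_congr rfl fun q _ => (Gmap_tmul eR eR_right p.1 _ _).symm
      _ = ∑ p ∈ A, eR (BalTensor.tmul S M N p.1 p.2) • m := by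
          refine Finset.sum_congr rfl fun p _ => ?_
          rw [hvL, AddEquiv.symm_apply_apply]
          exact Gmap_tmul eR eR_right p.1 p.2 m
      _ = eR (eR.symm 1) • m := by rw [← Finset.sum_smul, ← map_sum, ← hu]
      _ = m := by rw [AddEquiv.apply_symm_apply, one_smul]
  have key2 : ∀ m : M,
      ∑ p ∈ A, op (eS (BalTensor.tmul R N M p.2
        (∑ q ∈ B, eR (BalTensor.tmul S M N m q.1) • q.2))) • p.1 = m := by
    intro m
    have step1 : ∀ p : M × N,
        BalTensor.tmul R N M p.2 (∑ q ∈ B, eR (BalTensor.tmul S M N m q.1) • q.2)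
          = ∑ q ∈ B, BalTensor.tmul R N M (op (eR (BalTensor.tmul S M N m q.1)) • p.2) q.2 := by
      intro p
      rw [BalTensor.tmul_sum']
      exact Finset.sum_congr rfl fun q _ =>
        (BalTensor.tmul_balance p.2 (eR (BalTensor.tmul S M N m q.1)) q.2).symm
    calc ∑ p ∈ A, op (eS (BalTensor.tmul R N M p.2
            (∑ q ∈ B, eR (BalTensor.tmul S M N m q.1) • q.2))) • p.1
        = ∑ p ∈ A, ∑ q ∈ B,
            op (eS (BalTensor.tmul R N M
              (op (eR (BalTensor.tmul S M N m q.1)) • p.2) q.2)) • p.1 := by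
          refine Finset.sum_congr rfl fun p _ => ?_
          rw [step1 p, map_sum, Finset.op_sum, Finset.sum_smul]
      _ = ∑ q ∈ B, ∑ p ∈ A,
            op (eS (BalTensor.tmul R N M
              (op (eR (BalTensor.tmul S M N m q.1)) • p.2) q.2)) • p.1 :=
          Finset.sum_comm
      _ = ∑ q ∈ B, Fmap eS eS_left q.2
            (∑ p ∈ A, BalTensor.tmul S M N p.1
              (op (eR (BalTensor.tmul S M N m q.1)) • p.2)) := by
          refine Finset.sum_congr rfl fun q _ => ?_
          rw [map_sum]
          exact Finset.sum_congr rfl fun p _ => (Fmap_tmul eS eS_left q.2 _ _).symm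
      _ = ∑ q ∈ B, op (eS (BalTensor.tmul R N M q.1 q.2)) • m := by
          refine Finset.sum_congr rfl fun q _ => ?_
          rw [huR, AddEquiv.symm_apply_apply]
          exact Fmap_tmul eS eS_left q.2 m q.1
      _ = op (eS (eS.symm 1)) • m := by
          rw [← Finset.sum_smul, ← Finset.op_sum, ← map_sum, ← hv]
      _ = m := by rw [AddEquiv.apply_symm_apply, op_one, one_smul]
  have hχ_smul : ∀ (r : R) (m : M),
      ∑ p ∈ A, op (eS (BalTensor.tmul R N M p.2 (r • m))) • p.1
        = r • ∑ p ∈ A, op (eS (BalTensor.tmul R N M p.2 m)) • p.1 := by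
    intro r m
    calc ∑ p ∈ A, op (eS (BalTensor.tmul R N M p.2 (r • m))) • p.1
        = Fmap eS eS_left m (∑ p ∈ A, BalTensor.tmul S M N p.1 (op r • p.2)) := by
          rw [map_sum]
          refine Finset.sum_congr rfl fun p _ => ?_
          rw [Fmap_tmul, BalTensor.tmul_balance]
      _ = Fmap eS eS_left m (∑ p ∈ A, BalTensor.tmul S M N (r • p.1) p.2) := by
          rw [huR, huL]
      _ = r • ∑ p ∈ A, op (eS (BalTensor.tmul R N M p.2 m)) • p.1 := by
          rw [map_sum, Finset.smul_sum]
          refine Finset.sum_congr rfl fun p _ => ?_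
          rw [Fmap_tmul]
          exact (smul_comm _ _ _).symm
  have hψ_smul : ∀ (s : S) (m : M),
      ∑ q ∈ B, eR (BalTensor.tmul S M N (op s • m) q.1) • q.2
        = op s • ∑ q ∈ B, eR (BalTensor.tmul S M N m q.1) • q.2 := by
    intro s m
    calc ∑ q ∈ B, eR (BalTensor.tmul S M N (op s • m) q.1) • q.2
        = Gmap eR eR_right m (∑ q ∈ B, BalTensor.tmul R N M (s • q.1) q.2) := by
          rw [map_sum]
          refine Finset.sum_congr rfl fun q _ => ?_
          rw [Gmap_tmul, BalTensor.tmul_balance]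
      _ = Gmap eR eR_right m (∑ q ∈ B, BalTensor.tmul R N M q.1 (op s • q.2)) := by
          rw [hvL, hvR]
      _ = op s • ∑ q ∈ B, eR (BalTensor.tmul S M N m q.1) • q.2 := by
          rw [map_sum, Finset.smul_sum]
          refine Finset.sum_congr rfl fun q _ => ?_
          rw [Gmap_tmul]
          exact smul_comm _ _ _
  have hχ_add : ∀ m₁ m₂ : M,
      ∑ p ∈ A, op (eS (BalTensor.tmul R N M p.2 (m₁ + m₂))) • p.1
        = (∑ p ∈ A, op (eS (BalTensor.tmul R N M p.2 m₁)) • p.1)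
          + ∑ p ∈ A, op (eS (BalTensor.tmul R N M p.2 m₂)) • p.1 := by
    intro m₁ m₂
    rw [← Finset.sum_add_distrib]
    refine Finset.sum_congr rfl fun p _ => ?_
    rw [BalTensor.tmul_add', map_add, op_add, add_smul]
  have hψ_add : ∀ m₁ m₂ : M,
      ∑ q ∈ B, eR (BalTensor.tmul S M N (m₁ + m₂) q.1) • q.2
        = (∑ q ∈ B, eR (BalTensor.tmul S M N m₁ q.1) • q.2)
          + ∑ q ∈ B, eR (BalTensor.tmul S M N m₂ q.1) • q.2 := by
    intro m₁ m₂
    rw [← Finset.sum_add_distrib]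
    refine Finset.sum_congr rfl fun q _ => ?_
    rw [BalTensor.add_tmul', map_add, add_smul]
  have resL := finite_projective_of_dual_basis B (fun q => q.2)
      (fun q =>
        { toFun := fun m => eR (BalTensor.tmul S M N
            (∑ p ∈ A, op (eS (BalTensor.tmul R N M p.2 m)) • p.1) q.1)
          map_add' := fun m₁ m₂ => by
            rw [hχ_add, BalTensor.add_tmul', map_add]
          map_smul' := fun r m => by
            rw [RingHom.id_apply, hχ_smul, ← BalTensor.smul_tmul, eR_left, smul_eq_mul] })
      key1
  have resS := finite_projective_of_dual_basis A (fun p => p.1)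
      (fun p =>
        { toFun := fun m => op (eS (BalTensor.tmul R N M p.2
            (∑ q ∈ B, eR (BalTensor.tmul S M N m q.1) • q.2)))
          map_add' := fun m₁ m₂ => by
            rw [hψ_add, BalTensor.tmul_add', map_add, op_add]
          map_smul' := fun s m => by
            rw [RingHom.id_apply, ← MulOpposite.op_unop s, hψ_smul, ← BalTensor.tmul_smul,
              eS_right, op_mul, smul_eq_mul] })
      key2
  exact ⟨resL.1, resL.2, resS.1, resS.2⟩
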